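/- Let p be an odd prime and let x, y be coprime integers. Write H_p = (x^p + y^p)/(x + y) (assuming x + y ≠ 0). Then gcd(x + y, H_p) = 1 or gcd(x + y, H_p) = p. -/

import Mathlib

theorem gcd_Hp_eq_one_or_p (p : ℕ) (hp : p.Prime) (hodd : Odd p)
    (x y : ℤ) (hxy : IsCoprime x y) (hne : x + y ≠ 0) :
    Int.gcd (x + y) ((x ^ p + y ^ p) / (x + y)) = 1 ∨
    Int.gcd (x + y) ((x ^ p + y ^ p) / (x + y)) = p := by
  set S : ℤ := ∑ i ∈ Finset.range p, x ^ i * (-y) ^ (p - 1 - i) with hS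
  have key : S * (x + y) = x ^ p + y ^ p := by
    have := geom_sum₂_mul (R := ℤ) x (-y) p
    rw [hodd.neg_pow] at this
    simpa [sub_neg_eq_add] using this
  have hdiv : (x ^ p + y ^ p) / (x + y) = S := by
    rw [← key, mul_comm, Int.mul_ediv_cancel_left _ hne]
  rw [hdiv]
  -- S ≡ p * x^(p-1) mod (x+y)
  have hmod : (x + y) ∣ S - (p : ℤ) * x ^ (p - 1) := by
    have hexp : ∀ i ∈ Finset.range p, x ^ i * x ^ (p - 1 - i) = x ^ (p - 1) := fun i hi => by
      rw [← pow_add]; congr 1; have := Finset.mem_range.mp hi; omega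
    have hrw : S - (p : ℤ) * x ^ (p - 1) =
        ∑ i ∈ Finset.range p, x ^ i * ((-y) ^ (p - 1 - i) - x ^ (p - 1 - i)) := by
      simp_rw [mul_sub, Finset.sum_sub_distrib, ← hS]
      congr 1
      rw [Finset.sum_congr rfl hexp, Finset.sum_const, Finset.card_range, nsmul_eq_mul]
    rw [hrw]
    refine Finset.dvd_sum fun i _ => Dvd.dvd.mul_left ?_ _
    have h1 : (-y) - x = -(x + y) := by ring
    have h2 := sub_dvd_pow_sub_pow (-y) x (p - 1 - i)
    rw [h1] at h2
    exact (dvd_neg.mpr dvd_rfl).trans h2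
  -- gcd divides p
  set d : ℕ := Int.gcd (x + y) S with hd
  have hdxy : (d : ℤ) ∣ x + y := Int.gcd_dvd_left (x + y) S
  have hdS : (d : ℤ) ∣ S := Int.gcd_dvd_right (x + y) S
  have hdp : (d : ℤ) ∣ (p : ℤ) * x ^ (p - 1) := by
    have h := hdS.sub (hdxy.trans hmod)
    simpa using h
  -- coprimality of x+y and x
  have hcop : IsCoprime (x + y) x := by
    obtain ⟨a, b, hab⟩ := hxy
    exact ⟨b, a - b, by linear_combination hab⟩
  have hcopd : IsCoprime ((d : ℤ)) (x ^ (p - 1)) :=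
    (hcop.of_isCoprime_of_dvd_left hdxy).pow_right
  have hdp' : (d : ℤ) ∣ (p : ℤ) := hcopd.dvd_of_dvd_mul_right hdp
  have hdn : d ∣ p := Int.ofNat_dvd.mp hdp'
  exact (Nat.Prime.eq_one_or_self_of_dvd hp d hdn).imp id id
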